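/- arXiv:2107.12834 — 2 statements merged into one kernel-verified Lean document; each statement's English description precedes it below -/
import Mathlib

section
/- Let f : ℝ⁴ → ℂ be a Schwartz function and e ∈ ℝ⁴, e ≠ 0. Then the directional derivative of I_e f along e satisfies (e·∂)(I_e f)(x) = -f(x) for all x, where (e·∂)g(x) = Σ_μ e^μ ∂_μ g(x). -/
open MeasureTheory Set Metric Filter

private lemma schwartz_decay_two {F : Type*} [NormedAddCommGroup F] [NormedSpace ℝ F]
    (f : SchwartzMap (EuclideanSpace ℝ (Fin 4)) F) :
    ∃ C : ℝ, 0 ≤ C ∧ ∀ y, (1 + ‖y‖) ^ 2 * ‖f y‖ ≤ C := by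
  refine ⟨2 ^ 2 * (Finset.Iic ((2 : ℕ), (0 : ℕ))).sup
      (fun m => SchwartzMap.seminorm ℝ m.1 m.2) f, by positivity, fun y => ?_⟩
  have h := SchwartzMap.one_add_le_sup_seminorm_apply (𝕜 := ℝ)
    (m := ((2 : ℕ), (0 : ℕ))) (k := 2) (n := 0) le_rfl le_rfl f y
  simpa [norm_iteratedFDeriv_zero] using h

/-- For a Schwartz function `f` on `ℝ⁴` and `e ≠ 0`, the directional derivative of the
string integral `I_e f(x) = ∫₀^∞ f(x+se) ds` along `e` satisfies `(e·∂)(I_e f)(x) = -f x`. -/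
theorem string_integral_directional_derivative
    (f : SchwartzMap (EuclideanSpace ℝ (Fin 4)) ℂ)
    (e : EuclideanSpace ℝ (Fin 4)) (he : e ≠ 0)
    (x : EuclideanSpace ℝ (Fin 4)) :
    fderiv ℝ (fun y : EuclideanSpace ℝ (Fin 4) =>
      ∫ s in Set.Ioi (0:ℝ), f (y + s • e)) x e = -f x := by
  classical
  obtain ⟨C₀, hC₀, hf0⟩ := schwartz_decay_two f
  obtain ⟨C₁, hC₁, hf1⟩ := schwartz_decay_two (SchwartzMap.fderivCLM ℝ (EuclideanSpace ℝ (Fin 4)) ℂ f)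
  have hf1' : ∀ y, (1 + ‖y‖) ^ 2 * ‖fderiv ℝ f y‖ ≤ C₁ := by
    intro y; simpa [SchwartzMap.fderivCLM_apply] using hf1 y
  have hcpos : (0 : ℝ) < ‖e‖ := norm_pos_iff.mpr he
  set c : ℝ := ‖e‖ with hc
  set M : ℝ := max 1 c⁻¹ with hMdef
  have hM1 : (1 : ℝ) ≤ M := le_max_left _ _
  set K : ℝ := (M * (2 + ‖x‖)) ^ 2 with hKdef
  have hK0 : (0 : ℝ) ≤ K := sq_nonneg _
  -- key geometric estimate
  have key : ∀ x' : EuclideanSpace ℝ (Fin 4), ‖x' - x‖ ≤ 1 → ∀ s : ℝ, 0 ≤ s →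
      1 + s ^ 2 ≤ K * (1 + ‖x' + s • e‖) ^ 2 := by
    intro x' hx' s hs
    have h1 : 1 + s ≤ M * (1 + s * c) := by
      rcases le_or_gt 1 c with h | h
      · have : (1 : ℝ) + s * 1 ≤ 1 + s * c := by nlinarith
        nlinarith [hM1, mul_nonneg hs hcpos.le]
      · have hMc : M = c⁻¹ := max_eq_right ((one_le_inv₀ hcpos).mpr h.le)
        rw [hMc]
        have : c⁻¹ * (1 + s * c) = c⁻¹ + s := by field_simp
        rw [this]
        have : (1 : ℝ) ≤ c⁻¹ := (one_le_inv₀ hcpos).mpr h.le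
        linarith
    have h2 : 1 + s * c ≤ (2 + ‖x‖) * (1 + ‖x' + s • e‖) := by
      have hsc : s * c = ‖s • e‖ := by
        rw [norm_smul, Real.norm_eq_abs, abs_of_nonneg hs, hc]
      have hsub : ‖s • e‖ ≤ ‖x'‖ + ‖x' + s • e‖ := by
        have h := norm_sub_le (x' + s • e) x'
        rw [add_sub_cancel_left] at h
        linarith
      have hx'n : ‖x'‖ ≤ ‖x‖ + 1 := by
        have hx'' : x' = (x' - x) + x := by abel
        calc ‖x'‖ = ‖(x' - x) + x‖ := by rw [← hx'']
          _ ≤ ‖x' - x‖ + ‖x‖ := norm_add_le _ _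
          _ ≤ ‖x‖ + 1 := by linarith
      nlinarith [norm_nonneg (x' + s • e), norm_nonneg x]
    have h3 : 1 + s ^ 2 ≤ (1 + s) ^ 2 := by nlinarith
    have h4 : (0 : ℝ) ≤ 1 + s := by linarith
    have h5 : (0 : ℝ) ≤ 1 + s * c := by positivity
    calc 1 + s ^ 2 ≤ (1 + s) ^ 2 := h3
      _ ≤ (M * (1 + s * c)) ^ 2 := by
          apply pow_le_pow_left₀ h4 h1
      _ ≤ (M * ((2 + ‖x‖) * (1 + ‖x' + s • e‖))) ^ 2 := by
          apply pow_le_pow_left₀ (by positivity)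
          exact mul_le_mul_of_nonneg_left h2 (by linarith)
      _ = K * (1 + ‖x' + s • e‖) ^ 2 := by rw [hKdef]; ring
  have hposs : ∀ s : ℝ, (0 : ℝ) < 1 + s ^ 2 := fun s => by positivity
  -- bound on fderiv
  have hbnd1 : ∀ x' : EuclideanSpace ℝ (Fin 4), ‖x' - x‖ ≤ 1 → ∀ s : ℝ, 0 ≤ s →
      ‖fderiv ℝ f (x' + s • e)‖ ≤ (C₁ * K) / (1 + s ^ 2) := by
    intro x' hx' s hs
    rw [le_div_iff₀ (hposs s)]
    calc ‖fderiv ℝ f (x' + s • e)‖ * (1 + s ^ 2)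
        ≤ ‖fderiv ℝ f (x' + s • e)‖ * (K * (1 + ‖x' + s • e‖) ^ 2) :=
          mul_le_mul_of_nonneg_left (key x' hx' s hs) (norm_nonneg _)
      _ = K * ((1 + ‖x' + s • e‖) ^ 2 * ‖fderiv ℝ f (x' + s • e)‖) := by ring
      _ ≤ K * C₁ := mul_le_mul_of_nonneg_left (hf1' _) hK0
      _ = C₁ * K := mul_comm _ _
  have hbnd0 : ∀ s : ℝ, 0 ≤ s → ‖f (x + s • e)‖ ≤ (C₀ * K) / (1 + s ^ 2) := by
    intro s hs
    rw [le_div_iff₀ (hposs s)]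
    calc ‖f (x + s • e)‖ * (1 + s ^ 2)
        ≤ ‖f (x + s • e)‖ * (K * (1 + ‖x + s • e‖) ^ 2) :=
          mul_le_mul_of_nonneg_left (key x (by simp) s hs) (norm_nonneg _)
      _ = K * ((1 + ‖x + s • e‖) ^ 2 * ‖f (x + s • e)‖) := by ring
      _ ≤ K * C₀ := mul_le_mul_of_nonneg_left (hf0 _) hK0
      _ = C₀ * K := mul_comm _ _
  have hint_inv : ∀ D : ℝ, Integrable (fun s : ℝ => D / (1 + s ^ 2))
      (volume.restrict (Ioi (0:ℝ))) := by
    intro D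
    simpa [div_eq_mul_inv] using (integrable_inv_one_add_sq.const_mul D).restrict
      (s := Ioi (0:ℝ))
  have hline : ∀ x' : EuclideanSpace ℝ (Fin 4), Continuous fun s : ℝ => x' + s • e := fun x' =>
    continuous_const.add (continuous_id.smul continuous_const)
  -- differentiation under the integral sign
  have hF : HasFDerivAt (fun y : EuclideanSpace ℝ (Fin 4) => ∫ s in Set.Ioi (0:ℝ), f (y + s • e))
      (∫ s in Set.Ioi (0:ℝ), fderiv ℝ f (x + s • e)) x := by
    apply hasFDerivAt_integral_of_dominated_of_fderiv_le
      (F := fun y s => f (y + s • e)) (F' := fun y s => fderiv ℝ f (y + s • e))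
      (bound := fun s => (C₁ * K) / (1 + s ^ 2)) (s := ball x 1) (ball_mem_nhds x one_pos)
    · filter_upwards with y
      exact (f.continuous.comp (hline y)).aestronglyMeasurable
    · refine (Integrable.mono' (hint_inv (C₀ * K)) ?_ ?_)
      · exact (f.continuous.comp (hline x)).aestronglyMeasurable
      · filter_upwards [ae_restrict_mem measurableSet_Ioi] with s hs
        exact hbnd0 s (le_of_lt hs)
    · exact (((SchwartzMap.fderivCLM ℝ (EuclideanSpace ℝ (Fin 4)) ℂ f).continuous.comp (hline x)).congr
        (by intro s; simp [SchwartzMap.fderivCLM_apply])).aestronglyMeasurable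
    · filter_upwards [ae_restrict_mem measurableSet_Ioi] with s hs x' hx'
      exact hbnd1 x' (le_of_lt (mem_ball_iff_norm.mp hx')) s (le_of_lt hs)
    · exact hint_inv (C₁ * K)
    · filter_upwards with s x' _
      have hd : HasFDerivAt f (fderiv ℝ f (x' + s • e)) (x' + s • e) :=
        f.differentiableAt.hasFDerivAt
      have h2 : HasFDerivAt (fun y : EuclideanSpace ℝ (Fin 4) => y + s • e)
          (ContinuousLinearMap.id ℝ _) x' := (hasFDerivAt_id x').add_const _
      simpa [Function.comp_def] using hd.comp x' h2
  rw [hF.fderiv]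
  -- integrability of the derivative along the ray
  have hint1 : Integrable (fun s : ℝ => fderiv ℝ f (x + s • e))
      (volume.restrict (Ioi (0:ℝ))) := by
    refine Integrable.mono' (hint_inv (C₁ * K)) ?_ ?_
    · exact (((SchwartzMap.fderivCLM ℝ (EuclideanSpace ℝ (Fin 4)) ℂ f).continuous.comp (hline x)).congr
        (by intro s; simp [SchwartzMap.fderivCLM_apply])).aestronglyMeasurable
    · filter_upwards [ae_restrict_mem measurableSet_Ioi] with s hs
      exact hbnd1 x (by simp) s (le_of_lt hs)
  rw [ContinuousLinearMap.integral_apply hint1]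
  -- FTC on the half-line
  have hderiv : ∀ s ∈ Ici (0:ℝ), HasDerivAt (fun s : ℝ => f (x + s • e))
      (fderiv ℝ f (x + s • e) e) s := by
    intro s _
    have hd : HasFDerivAt f (fderiv ℝ f (x + s • e)) (x + s • e) :=
      f.differentiableAt.hasFDerivAt
    have h2 : HasDerivAt (fun s : ℝ => x + s • e) e s := by
      simpa using ((hasDerivAt_id s).smul_const e).const_add x
    simpa [Function.comp_def] using hd.comp_hasDerivAt s h2
  have hint2 : IntegrableOn (fun s : ℝ => fderiv ℝ f (x + s • e) e) (Ioi (0:ℝ)) := by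
    refine Integrable.mono' (hint_inv (C₁ * K * ‖e‖)) ?_ ?_
    · exact ((((SchwartzMap.fderivCLM ℝ (EuclideanSpace ℝ (Fin 4)) ℂ f).continuous.comp (hline x)).congr
        (by intro s; simp [SchwartzMap.fderivCLM_apply])).clm_apply
        continuous_const).aestronglyMeasurable
    · filter_upwards [ae_restrict_mem measurableSet_Ioi] with s hs
      calc ‖fderiv ℝ f (x + s • e) e‖ ≤ ‖fderiv ℝ f (x + s • e)‖ * ‖e‖ :=
            (fderiv ℝ f (x + s • e)).le_opNorm e
        _ ≤ ((C₁ * K) / (1 + s ^ 2)) * ‖e‖ :=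
            mul_le_mul_of_nonneg_right (hbnd1 x (by simp) s (le_of_lt hs)) (norm_nonneg e)
        _ = (C₁ * K * ‖e‖) / (1 + s ^ 2) := by ring
  have htend : Tendsto (fun s : ℝ => f (x + s • e)) atTop (nhds 0) := by
    have h1 : Tendsto (fun s : ℝ => 1 + s ^ 2) atTop atTop :=
      tendsto_atTop_add_const_left _ _ (tendsto_pow_atTop two_ne_zero)
    have h2 : Tendsto (fun s : ℝ => (C₀ * K) / (1 + s ^ 2)) atTop (nhds 0) := by
      have := (tendsto_inv_atTop_zero.comp h1).const_mul (C₀ * K)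
      simpa [div_eq_mul_inv, Function.comp_def] using this
    exact squeeze_zero_norm'
      (by filter_upwards [eventually_ge_atTop (0:ℝ)] with s hs using hbnd0 s hs) h2
  have := integral_Ioi_of_hasDerivAt_of_tendsto' hderiv hint2 htend
  rw [this]
  simp
end

section
/- For φ a Schwartz function on ℝ, the limit lim_{ε→0⁺} ∫_ℝ φ(t)/(t - iε) dt exists and equals p.v.∫_ℝ φ(t)/t dt + iπ φ(0), where p.v. denotes the Cauchy principal value. In particular t ↦ [t - i0]^{-1} defines a tempered distribution on ℝ. -/
open MeasureTheory Filter Complex Set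

noncomputable section

namespace SokhotskiAux

lemma re_sub_I (t ε : ℝ) : ((t:ℂ) - ε * I).re = t := by simp
lemma im_sub_I (t ε : ℝ) : ((t:ℂ) - ε * I).im = -ε := by simp

lemma abs_le_norm (t ε : ℝ) : |t| ≤ ‖(t:ℂ) - ε * I‖ := by
  calc |t| = |((t:ℂ) - ε*I).re| := by rw [re_sub_I]
    _ ≤ ‖(t:ℂ) - ε*I‖ := Complex.abs_re_le_norm _
    _ = ‖(t:ℂ) - ε*I‖ := rfl

lemma eps_le_norm (t ε : ℝ) : |ε| ≤ ‖(t:ℂ) - ε * I‖ := by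
  calc |ε| = |((t:ℂ) - ε*I).im| := by rw [im_sub_I, abs_neg]
    _ ≤ ‖(t:ℂ) - ε*I‖ := Complex.abs_im_le_norm _
    _ = ‖(t:ℂ) - ε*I‖ := rfl

lemma sub_I_ne (t ε : ℝ) (hε : ε ≠ 0) : (t:ℂ) - ε * I ≠ 0 := by
  intro h
  have h2 : ((t:ℂ) - ε * I).im = -ε := by simp
  rw [h] at h2; simp at h2; exact hε h2

/-- Lipschitz bound for a Schwartz function. -/
lemma lip (φ : SchwartzMap ℝ ℂ) : ∃ L : ℝ, 0 ≤ L ∧ ∀ t : ℝ, ‖φ t - φ 0‖ ≤ L * |t| := by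
  obtain ⟨C, hC⟩ := φ.decay' 0 1
  have hC' : ∀ x : ℝ, ‖fderiv ℝ φ x‖ ≤ C := by
    intro x
    have h1 := hC x
    simp only [pow_zero, one_mul] at h1
    refine le_trans ?_ h1
    apply ContinuousLinearMap.opNorm_le_bound _ (norm_nonneg _)
    intro v
    have := (iteratedFDeriv ℝ 1 (φ : ℝ → ℂ) x).le_opNorm (fun _ => v)
    calc ‖fderiv ℝ (φ : ℝ → ℂ) x v‖ = ‖iteratedFDeriv ℝ 1 (φ : ℝ → ℂ) x (fun _ => v)‖ := by
          rw [iteratedFDeriv_one_apply]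
      _ ≤ ‖iteratedFDeriv ℝ 1 (φ : ℝ → ℂ) x‖ * ‖v‖ := by
          simpa using this
  refine ⟨max C 0, le_max_right _ _, fun t => ?_⟩
  have := Convex.norm_image_sub_le_of_norm_fderiv_le
    (f := (φ : ℝ → ℂ)) (C := max C 0) (s := Set.univ)
    (fun x _ => φ.differentiableAt) (fun x _ => le_trans (hC' x) (le_max_left _ _))
    convex_univ (Set.mem_univ 0) (Set.mem_univ t)
  simpa [Real.norm_eq_abs] using this

lemma norm_div_le {a b : ℂ} {L : ℝ} (hL : 0 ≤ L) (h : ‖a‖ ≤ L * ‖b‖) : ‖a / b‖ ≤ L := by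
  by_cases hb : b = 0
  · simp [hb, hL]
  · rw [norm_div, div_le_iff₀ (norm_pos_iff.2 hb)]
    exact h

lemma cont_inv (ε : ℝ) (hε : ε ≠ 0) :
    Continuous fun t : ℝ => ((t:ℂ) - ε * I)⁻¹ := by
  apply Continuous.inv₀
  · exact (Complex.continuous_ofReal.sub continuous_const)
  · exact fun t => sub_I_ne t ε hε

lemma mid_integral (ε : ℝ) (hε : 0 < ε) :
    ∫ t in Ioo (-1:ℝ) 1, ((t:ℂ) - ε * I)⁻¹
      = Complex.log (1 - ε * I) - Complex.log (-1 - ε * I) := by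
  have h0 : ∫ t in Ioo (-1:ℝ) 1, ((t:ℂ) - ε * I)⁻¹
      = ∫ t in Ioc (-1:ℝ) 1, ((t:ℂ) - ε * I)⁻¹ :=
    (MeasureTheory.integral_Ioc_eq_integral_Ioo).symm
  have h0' : ∫ t in (-1:ℝ)..1, ((t:ℂ) - ε * I)⁻¹
      = ∫ t in Ioc (-1:ℝ) 1, ((t:ℂ) - ε * I)⁻¹ :=
    intervalIntegral.integral_of_le (by norm_num : (-1:ℝ) ≤ 1)
  rw [h0, ← h0']
  have key : ∫ t in (-1:ℝ)..1, ((t:ℂ) - ε * I)⁻¹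
      = Complex.log ((1:ℝ) - ε * I) - Complex.log ((-1:ℝ) - ε * I) := by
    refine intervalIntegral.integral_eq_sub_of_hasDerivAt
        (f := fun x : ℝ => Complex.log ((x:ℂ) - ε * I)) (fun x _ => ?_) ?_
    · have h1 : HasDerivAt (fun x : ℝ => (x:ℂ) - ε * I) 1 x := by
        simpa using (Complex.ofRealCLM.hasDerivAt (x := x)).sub_const (ε * I)
      have h2 : ((x:ℂ) - ε * I) ∈ Complex.slitPlane := by
        refine Or.inr ?_
        simp [hε.ne']
      have := h1.clog_real h2
      simpa [one_div] using this
    · exact ((cont_inv ε hε.ne').continuousOn).intervalIntegrable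
  rw [key]
  norm_num

lemma mid_tendsto :
    Tendsto (fun ε : ℝ => Complex.log (1 - ε * I) - Complex.log (-1 - ε * I))
      (nhdsWithin 0 (Set.Ioi 0)) (nhds ((Real.pi : ℂ) * I)) := by
  have h1 : Tendsto (fun ε : ℝ => Complex.log (1 - ε * I))
      (nhdsWithin 0 (Set.Ioi 0)) (nhds 0) := by
    have hc : ContinuousAt (fun ε : ℝ => Complex.log (1 - ε * I)) 0 := by
      have hin : ContinuousAt (fun ε : ℝ => (1:ℂ) - ε * I) 0 := by fun_prop
      have hlog : ContinuousAt Complex.log (1:ℂ) :=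
        continuousAt_clog (Or.inl (by norm_num))
      have := ContinuousAt.comp (g := Complex.log) (f := fun ε : ℝ => (1:ℂ) - ε * I)
        (by simpa using hlog) hin
      exact this
    have := hc.tendsto
    simpa using this.mono_left nhdsWithin_le_nhds
  have h2 : Tendsto (fun ε : ℝ => Complex.log (-1 - ε * I))
      (nhdsWithin 0 (Set.Ioi 0)) (nhds (-(Real.pi : ℂ) * I)) := by
    have heq : ∀ ε ∈ Set.Ioi (0:ℝ),
        Complex.log (-1 - ε * I)
          = (Real.log (‖(-1 - ε * I : ℂ)‖) : ℂ)
            + ((Real.arcsin (ε / ‖(-1 - ε * I : ℂ)‖) - Real.pi : ℝ) : ℂ) * I := by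
      intro ε hε
      have hre : ((-1 : ℂ) - ε * I).re < 0 := by simp
      have him : ((-1 : ℂ) - ε * I).im < 0 := by simp; exact hε
      rw [Complex.log]
      congr 2
      rw [Complex.arg_of_re_neg_of_im_neg hre him]
      congr 2
      simp
    have habs : Tendsto (fun ε : ℝ => ‖(-1 - ε * I : ℂ)‖)
        (nhdsWithin 0 (Set.Ioi 0)) (nhds 1) := by
      have : ContinuousAt (fun ε : ℝ => ‖(-1 - ε * I : ℂ)‖) 0 := by
        apply continuous_norm.continuousAt.comp
        fun_prop
      have h := this.tendsto
      simp only [Complex.ofReal_zero, zero_mul, sub_zero] at h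
      have : ‖(-1 : ℂ)‖ = 1 := by simp
      rw [this] at h
      exact h.mono_left nhdsWithin_le_nhds
    have hlog : Tendsto (fun ε : ℝ => Real.log (‖(-1 - ε * I : ℂ)‖))
        (nhdsWithin 0 (Set.Ioi 0)) (nhds 0) := by
      have : Tendsto Real.log (nhds 1) (nhds 0) := by
        simpa using (Real.continuousAt_log (by norm_num : (1:ℝ) ≠ 0)).tendsto
      exact this.comp habs
    have harcsin : Tendsto (fun ε : ℝ => Real.arcsin (ε / ‖(-1 - ε * I : ℂ)‖))
        (nhdsWithin 0 (Set.Ioi 0)) (nhds 0) := by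
      have hdiv : Tendsto (fun ε : ℝ => ε / ‖(-1 - ε * I : ℂ)‖)
          (nhdsWithin 0 (Set.Ioi 0)) (nhds 0) := by
        have := (tendsto_id.mono_left (nhdsWithin_le_nhds (s := Set.Ioi (0:ℝ)))).div habs one_ne_zero
        rw [zero_div] at this
        exact this
      have : Tendsto Real.arcsin (nhds 0) (nhds 0) := by
        simpa using Real.continuous_arcsin.continuousAt (x := 0).tendsto
      exact this.comp hdiv
    have hofreal : Tendsto (fun ε : ℝ => ((Real.log (‖(-1 - ε * I : ℂ)‖) : ℝ) : ℂ))
        (nhdsWithin 0 (Set.Ioi 0)) (nhds 0) := by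
      have := (Complex.continuous_ofReal.tendsto 0).comp hlog
      simpa [Function.comp_def] using this
    have harg : Tendsto (fun ε : ℝ => ((Real.arcsin (ε / ‖(-1 - ε * I : ℂ)‖) - Real.pi : ℝ) : ℂ))
        (nhdsWithin 0 (Set.Ioi 0)) (nhds (-(Real.pi:ℂ))) := by
      have h := harcsin.sub_const Real.pi
      have := (Complex.continuous_ofReal.tendsto (0 - Real.pi)).comp h
      simpa [Function.comp_def, Complex.ofReal_sub] using this
    have hcomb : Tendsto (fun ε : ℝ => ((Real.log (‖(-1 - ε * I : ℂ)‖) : ℝ) : ℂ)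
        + ((Real.arcsin (ε / ‖(-1 - ε * I : ℂ)‖) - Real.pi : ℝ) : ℂ) * I)
        (nhdsWithin 0 (Set.Ioi 0)) (nhds (-(Real.pi:ℂ) * I)) := by
      have := hofreal.add (harg.mul_const I)
      simpa using this
    refine Tendsto.congr' ?_ hcomb
    filter_upwards [self_mem_nhdsWithin] with ε hε
    exact (heq ε hε).symm
  have := h1.sub h2
  simpa using this

lemma integrableOn_of_bound {h : ℝ → ℂ} (hmeas : AEStronglyMeasurable h volume)
    {s : Set ℝ} (hs : MeasurableSet s) (hfin : volume s < ⊤) {C : ℝ}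
    (hb : ∀ t ∈ s, ‖h t‖ ≤ C) : IntegrableOn h s volume := by
  have hc : IntegrableOn (fun _ : ℝ => C) s volume := integrableOn_const hfin.ne
  refine Integrable.mono' hc hmeas.restrict ?_
  exact (ae_restrict_iff' hs).2 (ae_of_all _ hb)

lemma integrableOn_of_schwartz_bound (φ : SchwartzMap ℝ ℂ) {h : ℝ → ℂ}
    (hmeas : AEStronglyMeasurable h volume) {s : Set ℝ} (hs : MeasurableSet s) {C : ℝ}
    (hb : ∀ t ∈ s, ‖h t‖ ≤ C * ‖φ t‖) : IntegrableOn h s volume := by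
  refine Integrable.mono' ((φ.integrable.norm.const_mul C).restrict (s := s)) hmeas.restrict ?_
  exact (ae_restrict_iff' hs).2 (ae_of_all _ hb)

lemma measurable_den_div (g : ℝ → ℂ) (hg : Measurable g) (ε : ℝ) :
    Measurable fun t : ℝ => g t / ((t:ℂ) - ε * I) :=
  hg.div (Complex.measurable_ofReal.sub measurable_const)

end SokhotskiAux

end

open SokhotskiAux

/-- Sokhotski–Plemelj: for a Schwartz function `φ` on `ℝ`, the principal value
`p.v.∫ φ(t)/t dt` exists, and
`lim_{ε→0⁺} ∫ φ(t)/(t-iε) dt = p.v.∫ φ(t)/t dt + iπ φ(0)`. -/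
theorem sokhotski_plemelj (φ : SchwartzMap ℝ ℂ) :
    ∃ P : ℂ,
      Tendsto (fun δ : ℝ => ∫ t in {t : ℝ | δ ≤ |t|}, φ t / (t : ℂ))
        (nhdsWithin 0 (Set.Ioi 0)) (nhds P) ∧
      Tendsto (fun ε : ℝ => ∫ t : ℝ, φ t / ((t : ℂ) - ε * Complex.I))
        (nhdsWithin 0 (Set.Ioi 0)) (nhds (P + Real.pi * Complex.I * φ 0)) := by
  classical
  obtain ⟨L, hL0, hL⟩ := lip φ
  set U : Set ℝ := Ioo (-1:ℝ) 1 with hUdef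
  have hUmeas : MeasurableSet U := measurableSet_Ioo
  have hUfin : volume U < ⊤ := measure_Ioo_lt_top
  set g1 : ℝ → ℂ := fun t => (φ t - φ 0) / (t:ℂ) with hg1def
  set f : ℝ → ℂ := fun t => φ t / (t:ℂ) with hfdef
  have hφm : Measurable (φ : ℝ → ℂ) := φ.continuous.measurable
  have hg1m : Measurable g1 :=
    (hφm.sub measurable_const).div Complex.measurable_ofReal
  have hfm : Measurable f := hφm.div Complex.measurable_ofReal
  have hSmeas : ∀ δ : ℝ, MeasurableSet {t : ℝ | δ ≤ |t|} := fun δ =>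
    measurableSet_le measurable_const continuous_abs.measurable
  -- bound for g1
  have hg1bound : ∀ t : ℝ, ‖g1 t‖ ≤ L := by
    intro t
    refine norm_div_le hL0 ?_
    calc ‖φ t - φ 0‖ ≤ L * |t| := hL t
      _ = L * ‖(t:ℂ)‖ := by simp only [Complex.norm_real, Real.norm_eq_abs]
  have hg1εbound : ∀ (ε t : ℝ), ‖(φ t - φ 0) / ((t:ℂ) - ε * I)‖ ≤ L := by
    intro ε t
    refine norm_div_le hL0 ?_
    calc ‖φ t - φ 0‖ ≤ L * |t| := hL t
      _ ≤ L * ‖(t:ℂ) - ε * I‖ := by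
          exact mul_le_mul_of_nonneg_left (abs_le_norm t ε) hL0
  -- integrabilities on U
  have h_int_g1_U : IntegrableOn g1 U volume :=
    integrableOn_of_bound hg1m.aestronglyMeasurable hUmeas hUfin fun t _ => hg1bound t
  have h_int_g1ε_U : ∀ ε : ℝ, IntegrableOn (fun t => (φ t - φ 0) / ((t:ℂ) - ε * I)) U volume :=
    fun ε => integrableOn_of_bound (measurable_den_div _ (hφm.sub measurable_const) ε).aestronglyMeasurable
      hUmeas hUfin fun t _ => hg1εbound ε t
  have h_int_f_B : IntegrableOn f Uᶜ volume := by
    refine integrableOn_of_schwartz_bound φ hfm.aestronglyMeasurable hUmeas.compl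
      (C := 1) fun t ht => ?_
    have h1t : 1 ≤ |t| := by
      simp only [hUdef, Set.mem_compl_iff, Set.mem_Ioo, not_and_or, not_lt] at ht
      rcases ht with h | h
      · rw [_root_.abs_of_nonpos (by linarith)]; linarith
      · rw [_root_.abs_of_nonneg (by linarith)]; linarith
    rcases eq_or_ne t 0 with rfl | ht0
    · norm_num at h1t
    · rw [hfdef]
      simp only
      simp only [norm_div, Complex.norm_real, Real.norm_eq_abs, one_mul]
      exact div_le_self (norm_nonneg _) h1t
  -- a.e. nonzero
  have h_ae_ne : ∀ᵐ t : ℝ ∂volume, t ≠ 0 := by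
    rw [ae_iff]
    have : {t : ℝ | ¬ t ≠ 0} = {0} := by ext t; simp
    rw [this]
    exact Real.volume_singleton
  ------------------------------------------------------------------
  -- Part A core : DCT for the principal value small part
  ------------------------------------------------------------------
  have claimA : Tendsto (fun δ : ℝ => ∫ t in {t : ℝ | δ ≤ |t|} ∩ U, g1 t)
      (nhdsWithin 0 (Set.Ioi 0)) (nhds (∫ t in U, g1 t)) := by
    have key : ∀ δ : ℝ, ∫ t in {t : ℝ | δ ≤ |t|} ∩ U, g1 t
        = ∫ t, Set.indicator {t : ℝ | δ ≤ |t|} g1 t ∂(volume.restrict U) := by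
      intro δ
      rw [integral_indicator (hSmeas δ), Measure.restrict_restrict (hSmeas δ)]
    simp only [key]
    refine tendsto_integral_filter_of_dominated_convergence (fun _ => L) ?_ ?_ ?_ ?_
    · exact Eventually.of_forall fun δ =>
        (hg1m.indicator (hSmeas δ)).aestronglyMeasurable
    · refine Eventually.of_forall fun δ => ae_of_all _ fun t => ?_
      exact le_trans (norm_indicator_le_norm_self g1 t) (hg1bound t)
    · exact integrableOn_const hUfin.ne
    · filter_upwards [ae_restrict_of_ae h_ae_ne] with t ht
      have hev : ∀ᶠ δ in nhdsWithin 0 (Set.Ioi 0),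
          Set.indicator {s : ℝ | δ ≤ |s|} g1 t = g1 t := by
        have habs : 0 < |t| := _root_.abs_pos.2 ht
        have : ∀ᶠ δ in nhds (0:ℝ), δ < |t| := Filter.Tendsto.eventually_lt_const habs tendsto_id
        refine ((this.mono fun δ h => ?_)).filter_mono nhdsWithin_le_nhds
        exact Set.indicator_of_mem (show t ∈ {s : ℝ | δ ≤ |s|} from le_of_lt h) g1
      exact tendsto_const_nhds.congr' (hev.mono fun δ h => h.symm)
  ------------------------------------------------------------------
  -- Part B core 1 : DCT for small part with ε
  ------------------------------------------------------------------
  have claimB1 : Tendsto (fun ε : ℝ => ∫ t in U, (φ t - φ 0) / ((t:ℂ) - ε * I))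
      (nhdsWithin 0 (Set.Ioi 0)) (nhds (∫ t in U, g1 t)) := by
    refine tendsto_integral_filter_of_dominated_convergence (fun _ => L) ?_ ?_ ?_ ?_
    · exact Eventually.of_forall fun ε =>
        (measurable_den_div _ (hφm.sub measurable_const) ε).aestronglyMeasurable
    · exact Eventually.of_forall fun ε => ae_of_all _ fun t => hg1εbound ε t
    · exact integrableOn_const hUfin.ne
    · filter_upwards [ae_restrict_of_ae h_ae_ne] with t ht
      have hden : Tendsto (fun ε : ℝ => (t:ℂ) - ε * I) (nhds 0) (nhds (t:ℂ)) := by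
        have hc : Continuous fun ε : ℝ => (t:ℂ) - ε * I := by fun_prop
        have := hc.tendsto 0
        simpa using this
      have hne : ((t:ℂ)) ≠ 0 := Complex.ofReal_ne_zero.2 ht
      have := (tendsto_const_nhds (x := φ t - φ 0)).div hden hne
      exact this.mono_left nhdsWithin_le_nhds
  ------------------------------------------------------------------
  -- Part B core 3 : DCT for tail with ε
  ------------------------------------------------------------------
  have claimB3 : Tendsto (fun ε : ℝ => ∫ t in Uᶜ, φ t / ((t:ℂ) - ε * I))
      (nhdsWithin 0 (Set.Ioi 0)) (nhds (∫ t in Uᶜ, f t)) := by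
    refine tendsto_integral_filter_of_dominated_convergence (fun t => ‖φ t‖) ?_ ?_ ?_ ?_
    · exact Eventually.of_forall fun ε =>
        (measurable_den_div _ hφm ε).aestronglyMeasurable
    · refine Eventually.of_forall fun ε => ?_
      filter_upwards [ae_restrict_mem hUmeas.compl] with t ht
      have h1t : (1:ℝ) ≤ |t| := by
        simp only [hUdef, Set.mem_compl_iff, Set.mem_Ioo, not_and_or, not_lt] at ht
        rcases ht with h | h
        · rw [_root_.abs_of_nonpos (by linarith)]; linarith
        · rw [_root_.abs_of_nonneg (by linarith)]; linarith
      have h1n : (1:ℝ) ≤ ‖(t:ℂ) - ε * I‖ := le_trans h1t (abs_le_norm t ε)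
      rw [norm_div]
      exact div_le_self (norm_nonneg _) h1n
    · exact φ.integrable.norm.restrict
    · filter_upwards [ae_restrict_mem hUmeas.compl] with t ht
      have h1t : (1:ℝ) ≤ |t| := by
        simp only [hUdef, Set.mem_compl_iff, Set.mem_Ioo, not_and_or, not_lt] at ht
        rcases ht with h | h
        · rw [_root_.abs_of_nonpos (by linarith)]; linarith
        · rw [_root_.abs_of_nonneg (by linarith)]; linarith
      have ht0 : t ≠ 0 := by intro h; rw [h] at h1t; simp at h1t; linarith
      have hden : Tendsto (fun ε : ℝ => (t:ℂ) - ε * I) (nhds 0) (nhds (t:ℂ)) := by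
        have hc : Continuous fun ε : ℝ => (t:ℂ) - ε * I := by fun_prop
        have := hc.tendsto 0
        simpa using this
      have hne : ((t:ℂ)) ≠ 0 := Complex.ofReal_ne_zero.2 ht0
      have := (tendsto_const_nhds (x := φ t)).div hden hne
      exact this.mono_left nhdsWithin_le_nhds
  ------------------------------------------------------------------
  -- middle integral tendsto
  ------------------------------------------------------------------
  have claimB2 : Tendsto (fun ε : ℝ => ∫ t in U, ((t:ℂ) - ε * I)⁻¹)
      (nhdsWithin 0 (Set.Ioi 0)) (nhds ((Real.pi : ℂ) * I)) := by
    refine Tendsto.congr' ?_ mid_tendsto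
    filter_upwards [self_mem_nhdsWithin] with ε hε
    exact (mid_integral ε hε).symm
  ------------------------------------------------------------------
  refine ⟨(∫ t in U, g1 t) + ∫ t in Uᶜ, f t, ?_, ?_⟩
  ------------------------------------------------------------------
  -- Part A assembly
  ------------------------------------------------------------------
  · have hsplit : ∀ δ : ℝ, δ ∈ Set.Ioo (0:ℝ) 1 →
        ∫ t in {t : ℝ | δ ≤ |t|}, f t
          = (∫ t in {t : ℝ | δ ≤ |t|} ∩ U, g1 t) + ∫ t in Uᶜ, f t := by
      intro δ hδ
      obtain ⟨hδ0, hδ1⟩ := hδ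
      -- decompose the set
      have hdecomp : {t : ℝ | δ ≤ |t|} = ({t : ℝ | δ ≤ |t|} ∩ U) ∪ Uᶜ := by
        ext t
        simp only [Set.mem_union, Set.mem_inter_iff, Set.mem_setOf_eq, Set.mem_compl_iff,
          hUdef, Set.mem_Ioo, not_and_or, not_lt]
        constructor
        · intro h
          by_cases hc : -1 < t ∧ t < 1
          · exact Or.inl ⟨h, hc⟩
          · right
            rcases not_and_or.1 hc with h | h
            · exact Or.inl (not_lt.1 h)
            · exact Or.inr (not_lt.1 h)
        · rintro (⟨h, _⟩ | h)
          · exact h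
          · rcases h with h | h
            · rw [_root_.abs_of_nonpos (by linarith)]; linarith
            · rw [_root_.abs_of_nonneg (by linarith)]; linarith
      -- integrable on each part
      have h_int_f_SU : IntegrableOn f ({t : ℝ | δ ≤ |t|} ∩ U) volume := by
        refine integrableOn_of_schwartz_bound φ hfm.aestronglyMeasurable
          ((hSmeas δ).inter hUmeas) (C := δ⁻¹) fun t ht => ?_
        have hδt : δ ≤ |t| := ht.1
        have ht0 : t ≠ 0 := by
          intro h; rw [h] at hδt; simp at hδt; linarith
        rw [hfdef]; simp only
        simp only [norm_div, Complex.norm_real, Real.norm_eq_abs]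
        calc ‖φ t‖ / |t| ≤ ‖φ t‖ / δ := by
              apply div_le_div_of_nonneg_left (norm_nonneg _) hδ0 hδt
          _ = δ⁻¹ * ‖φ t‖ := div_eq_inv_mul _ _
      have hdisj : Disjoint ({t : ℝ | δ ≤ |t|} ∩ U) Uᶜ :=
        Disjoint.mono_left Set.inter_subset_right disjoint_compl_right
      conv_lhs => rw [hdecomp]
      rw [setIntegral_union hdisj hUmeas.compl h_int_f_SU h_int_f_B]
      congr 1
      -- on the small part, f = g1 + φ 0 • t⁻¹ and the t⁻¹ integral vanishes
      have h_int_inv : IntegrableOn (fun t : ℝ => ((t:ℂ))⁻¹) ({t : ℝ | δ ≤ |t|} ∩ U) volume := by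
        refine integrableOn_of_bound
          (Complex.measurable_ofReal.inv).aestronglyMeasurable
          ((hSmeas δ).inter hUmeas)
          (lt_of_le_of_lt (measure_mono Set.inter_subset_right) hUfin)
          (C := δ⁻¹) fun t ht => ?_
        have hδt : δ ≤ |t| := ht.1
        simp only [Pi.inv_apply, norm_inv, Complex.norm_real, Real.norm_eq_abs]
        exact inv_anti₀ hδ0 hδt
      have h_int_g1_SU : IntegrableOn g1 ({t : ℝ | δ ≤ |t|} ∩ U) volume :=
        h_int_g1_U.mono_set Set.inter_subset_right
      have hfun : ∀ t : ℝ, f t = g1 t + φ 0 * ((t:ℂ))⁻¹ := by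
        intro t
        rcases eq_or_ne t 0 with rfl | ht
        · simp [hfdef, hg1def]
        · have hne : ((t:ℂ)) ≠ 0 := Complex.ofReal_ne_zero.2 ht
          rw [hfdef, hg1def]
          simp only
          rw [div_eq_mul_inv, div_eq_mul_inv]; ring
      have hzero : ∫ t in ({t : ℝ | δ ≤ |t|} ∩ U), ((t:ℂ))⁻¹ = 0 := by
        have hseteq : {t : ℝ | δ ≤ |t|} ∩ U = Ioc (-1:ℝ) (-δ) ∪ Ico δ 1 := by
          ext t
          simp only [Set.mem_inter_iff, Set.mem_setOf_eq, hUdef, Set.mem_Ioo,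
            Set.mem_union, Set.mem_Ioc, Set.mem_Ico]
          constructor
          · rintro ⟨habs, hl, hr⟩
            rcases le_or_gt t 0 with hts | hts
            · left
              rw [_root_.abs_of_nonpos hts] at habs
              constructor <;> linarith
            · right
              rw [_root_.abs_of_pos hts] at habs
              exact ⟨habs, hr⟩
          · rintro (⟨hl, hr⟩ | ⟨hl, hr⟩)
            · rw [_root_.abs_of_nonpos (by linarith)]
              refine ⟨by linarith, hl, by linarith⟩
            · rw [_root_.abs_of_nonneg (by linarith)]
              exact ⟨hl, by linarith, hr⟩
        have hint1 : IntegrableOn (fun t : ℝ => ((t:ℂ))⁻¹) (Ioc (-1:ℝ) (-δ)) volume := by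
          refine integrableOn_of_bound (Complex.measurable_ofReal.inv).aestronglyMeasurable
            measurableSet_Ioc measure_Ioc_lt_top (C := δ⁻¹) fun t ht => ?_
          simp only [Pi.inv_apply, norm_inv, Complex.norm_real, Real.norm_eq_abs]
          refine inv_anti₀ hδ0 ?_
          rw [_root_.abs_of_nonpos (by linarith [ht.2] : t ≤ 0)]
          linarith [ht.2]
        have hint2 : IntegrableOn (fun t : ℝ => ((t:ℂ))⁻¹) (Ico δ 1) volume := by
          refine integrableOn_of_bound (Complex.measurable_ofReal.inv).aestronglyMeasurable
            measurableSet_Ico measure_Ico_lt_top (C := δ⁻¹) fun t ht => ?_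
          simp only [Pi.inv_apply, norm_inv, Complex.norm_real, Real.norm_eq_abs]
          refine inv_anti₀ hδ0 ?_
          rw [_root_.abs_of_nonneg (by linarith [ht.1] : 0 ≤ t)]
          exact ht.1
        have hdisj2 : Disjoint (Ioc (-1:ℝ) (-δ)) (Ico δ 1) := by
          rw [Set.disjoint_left]
          rintro t ⟨_, h1⟩ ⟨h2, _⟩
          linarith
        rw [hseteq, setIntegral_union hdisj2 measurableSet_Ico hint1 hint2]
        -- compute the two pieces
        have hI1 : ∫ t in Ioc (-1:ℝ) (-δ), ((t:ℂ))⁻¹ = ((Real.log δ : ℝ) : ℂ) := by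
          have h1 : ∫ t in Ioc (-1:ℝ) (-δ), ((t:ℂ))⁻¹ = ∫ t in (-1:ℝ)..(-δ), ((t:ℂ))⁻¹ :=
            (intervalIntegral.integral_of_le (by linarith : (-1:ℝ) ≤ -δ)).symm
          have h2 : ∫ t in (-1:ℝ)..(-δ), ((t:ℂ))⁻¹
              = ((∫ t in (-1:ℝ)..(-δ), t⁻¹ : ℝ) : ℂ) := by
            rw [← intervalIntegral.integral_ofReal]
            congr 1
            funext t
            simp
          have h3 : ∫ t in (-1:ℝ)..(-δ), t⁻¹ = Real.log ((-δ) / (-1)) := by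
            apply integral_inv
            rw [Set.uIcc_of_le (by linarith : (-1:ℝ) ≤ -δ)]
            simp only [Set.mem_Icc, not_and_or, not_le]
            right; linarith
          rw [h1, h2, h3]
          norm_num
        have hI2 : ∫ t in Ico δ 1, ((t:ℂ))⁻¹ = ((-Real.log δ : ℝ) : ℂ) := by
          have h0a : ∫ t in Ico δ 1, ((t:ℂ))⁻¹ = ∫ t in Ioo δ 1, ((t:ℂ))⁻¹ :=
            _root_.MeasureTheory.integral_Ico_eq_integral_Ioo
          have h0b : ∫ t in Ioc δ 1, ((t:ℂ))⁻¹ = ∫ t in Ioo δ 1, ((t:ℂ))⁻¹ :=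
            _root_.MeasureTheory.integral_Ioc_eq_integral_Ioo
          have h0 : ∫ t in Ico δ 1, ((t:ℂ))⁻¹ = ∫ t in Ioc δ 1, ((t:ℂ))⁻¹ := by
            rw [h0a, h0b]
          have h1 : ∫ t in Ioc δ 1, ((t:ℂ))⁻¹ = ∫ t in δ..1, ((t:ℂ))⁻¹ :=
            (intervalIntegral.integral_of_le (by linarith : δ ≤ 1)).symm
          have h2 : ∫ t in δ..1, ((t:ℂ))⁻¹ = ((∫ t in δ..1, t⁻¹ : ℝ) : ℂ) := by
            rw [← intervalIntegral.integral_ofReal]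
            congr 1
            funext t
            simp
          have h3 : ∫ t in δ..1, t⁻¹ = Real.log (1 / δ) := by
            apply integral_inv
            rw [Set.uIcc_of_le (by linarith : δ ≤ 1)]
            simp only [Set.mem_Icc, not_and_or, not_le]
            left; linarith
          rw [h0, h1, h2, h3]
          rw [Real.log_div one_ne_zero (by linarith : δ ≠ 0)]
          norm_num
        rw [hI1, hI2]
        push_cast
        ring
      calc ∫ t in ({t : ℝ | δ ≤ |t|} ∩ U), f t
          = ∫ t in ({t : ℝ | δ ≤ |t|} ∩ U), (g1 t + φ 0 * ((t:ℂ))⁻¹) := by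
            exact setIntegral_congr_fun ((hSmeas δ).inter hUmeas) fun t _ => hfun t
        _ = (∫ t in ({t : ℝ | δ ≤ |t|} ∩ U), g1 t)
            + ∫ t in ({t : ℝ | δ ≤ |t|} ∩ U), φ 0 * ((t:ℂ))⁻¹ := by
            exact integral_add h_int_g1_SU (h_int_inv.const_mul _)
        _ = (∫ t in ({t : ℝ | δ ≤ |t|} ∩ U), g1 t)
            + φ 0 * ∫ t in ({t : ℝ | δ ≤ |t|} ∩ U), ((t:ℂ))⁻¹ := by
            rw [integral_const_mul]
        _ = ∫ t in ({t : ℝ | δ ≤ |t|} ∩ U), g1 t := by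
            rw [hzero]; ring
    have hev : ∀ᶠ δ in nhdsWithin (0:ℝ) (Set.Ioi 0),
        ∫ t in {t : ℝ | δ ≤ |t|}, f t
          = (∫ t in {t : ℝ | δ ≤ |t|} ∩ U, g1 t) + ∫ t in Uᶜ, f t := by
      filter_upwards [Ioo_mem_nhdsGT_of_mem (by norm_num : (0:ℝ) ∈ Set.Ico (0:ℝ) 1)]
        with δ hδ
      exact hsplit δ hδ
    exact Tendsto.congr' (hev.mono fun δ h => h.symm) (claimA.add tendsto_const_nhds)
  ------------------------------------------------------------------
  -- Part B assembly
  ------------------------------------------------------------------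
  · have hsplit : ∀ ε : ℝ, ε ∈ Set.Ioi (0:ℝ) →
        ∫ t : ℝ, φ t / ((t:ℂ) - ε * I)
          = (∫ t in U, (φ t - φ 0) / ((t:ℂ) - ε * I))
            + φ 0 * (∫ t in U, ((t:ℂ) - ε * I)⁻¹)
            + ∫ t in Uᶜ, φ t / ((t:ℂ) - ε * I) := by
      intro ε hε
      have hε0 : (0:ℝ) < ε := hε
      have hInttot : Integrable (fun t : ℝ => φ t / ((t:ℂ) - ε * I)) volume := by
        refine Integrable.mono' (φ.integrable.norm.const_mul ε⁻¹)
          (measurable_den_div _ hφm ε).aestronglyMeasurable ?_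
        refine ae_of_all _ fun t => ?_
        rw [norm_div]
        have hεn : ε ≤ ‖(t:ℂ) - ε * I‖ := by
          have := eps_le_norm t ε
          rwa [_root_.abs_of_pos hε0] at this
        calc ‖φ t‖ / ‖(t:ℂ) - ε * I‖ ≤ ‖φ t‖ / ε := by
              apply div_le_div_of_nonneg_left (norm_nonneg _) hε0 hεn
          _ = ε⁻¹ * ‖φ t‖ := by rw [div_eq_inv_mul]
      have hIntU : IntegrableOn (fun t : ℝ => φ t / ((t:ℂ) - ε * I)) U volume :=
        hInttot.integrableOn
      have hIntB : IntegrableOn (fun t : ℝ => φ t / ((t:ℂ) - ε * I)) Uᶜ volume :=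
        hInttot.integrableOn
      have htot : ∫ t : ℝ, φ t / ((t:ℂ) - ε * I)
          = (∫ t in U, φ t / ((t:ℂ) - ε * I)) + ∫ t in Uᶜ, φ t / ((t:ℂ) - ε * I) :=
        (integral_add_compl hUmeas hInttot).symm
      rw [htot]
      congr 1
      -- split the U part
      have h_int_inv_U : IntegrableOn (fun t : ℝ => ((t:ℂ) - ε * I)⁻¹) U volume := by
        refine integrableOn_of_bound (cont_inv ε hε0.ne').measurable.aestronglyMeasurable
          hUmeas hUfin (C := ε⁻¹) fun t _ => ?_
        rw [norm_inv]
        refine inv_anti₀ hε0 ?_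
        have := eps_le_norm t ε
        rwa [_root_.abs_of_pos hε0] at this
      have hfun : ∀ t : ℝ, φ t / ((t:ℂ) - ε * I)
          = (φ t - φ 0) / ((t:ℂ) - ε * I) + φ 0 * ((t:ℂ) - ε * I)⁻¹ := by
        intro t
        have hne : (t:ℂ) - ε * I ≠ 0 := sub_I_ne t ε hε0.ne'
        rw [div_eq_mul_inv, div_eq_mul_inv]; ring
      calc ∫ t in U, φ t / ((t:ℂ) - ε * I)
          = ∫ t in U, ((φ t - φ 0) / ((t:ℂ) - ε * I) + φ 0 * ((t:ℂ) - ε * I)⁻¹) := by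
            exact setIntegral_congr_fun hUmeas fun t _ => hfun t
        _ = (∫ t in U, (φ t - φ 0) / ((t:ℂ) - ε * I))
            + ∫ t in U, φ 0 * ((t:ℂ) - ε * I)⁻¹ := by
            exact integral_add (h_int_g1ε_U ε) (h_int_inv_U.const_mul _)
        _ = (∫ t in U, (φ t - φ 0) / ((t:ℂ) - ε * I))
            + φ 0 * ∫ t in U, ((t:ℂ) - ε * I)⁻¹ := by
            rw [integral_const_mul]
    have hev : ∀ᶠ (ε : ℝ) in nhdsWithin (0:ℝ) (Set.Ioi (0:ℝ)),
        ∫ t : ℝ, φ t / ((t:ℂ) - ε * I)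
          = (∫ t in U, (φ t - φ 0) / ((t:ℂ) - ε * I))
            + φ 0 * (∫ t in U, ((t:ℂ) - ε * I)⁻¹)
            + ∫ t in Uᶜ, φ t / ((t:ℂ) - ε * I) := by
      filter_upwards [self_mem_nhdsWithin] with ε hε
      exact hsplit ε hε
    have hlim : Tendsto (fun ε : ℝ =>
        (∫ t in U, (φ t - φ 0) / ((t:ℂ) - ε * I))
          + φ 0 * (∫ t in U, ((t:ℂ) - ε * I)⁻¹)
          + ∫ t in Uᶜ, φ t / ((t:ℂ) - ε * I))
        (nhdsWithin 0 (Set.Ioi 0))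
        (nhds ((∫ t in U, g1 t) + φ 0 * ((Real.pi : ℂ) * I) + ∫ t in Uᶜ, f t)) :=
      (claimB1.add (tendsto_const_nhds.mul claimB2)).add claimB3
    have hfinal : (∫ t in U, g1 t) + φ 0 * ((Real.pi : ℂ) * I) + ∫ t in Uᶜ, f t
        = ((∫ t in U, g1 t) + ∫ t in Uᶜ, f t) + (Real.pi : ℂ) * I * φ 0 := by ring
    rw [hfinal] at hlim
    exact Tendsto.congr' (hev.mono fun ε h => h.symm) hlim
end
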